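/- Let 𝓤 be an ultrafilter on ℕ containing the cofinite filter, let 𝔽 = Filter.Germ ↑𝓤 ℝ, and let t, u ∈ 𝔽 with u > 0. Then the map s ↦ (s − t)/u is a strictly increasing bijection from WW(t,u) onto WW(0,1); hence any two walkable worlds are order isomorphic. -/

import Mathlib

/-- The walkable world around `t` with step length `u` in the ultrapower field
`𝔽 = Filter.Germ ↑𝓤 ℝ`: the set `WW(t,u) = ⋃ n, (t - n•u, t + n•u)` of elements
reachable from `t` by finitely many steps of length `u`. -/
def WW (𝓤 : Ultrafilter ℕ) (t u : Filter.Germ (𝓤 : Filter ℕ) ℝ) :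
    Set (Filter.Germ (𝓤 : Filter ℕ) ℝ) :=
  ⋃ n : ℕ, Set.Ioo (t - n • u) (t + n • u)

lemma mem_WW_iff (𝓤 : Ultrafilter ℕ) (t u s : Filter.Germ (𝓤 : Filter ℕ) ℝ) :
    s ∈ WW 𝓤 t u ↔ ∃ n : ℕ, t - (n : Filter.Germ (𝓤 : Filter ℕ) ℝ) * u < s ∧
      s < t + (n : Filter.Germ (𝓤 : Filter ℕ) ℝ) * u := by
  simp [WW, Set.mem_iUnion, Set.mem_Ioo, nsmul_eq_mul]

/-- In the ultrapower field of a free ultrafilter 𝓤 on ℕ, for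
t, u with u > 0, the map s ↦ (s − t)/u is a strictly increasing bijection from
WW(t,u) onto WW(0,1); hence any two walkable worlds are order isomorphic. -/
theorem walkable_worlds_order_isomorphic (𝓤 : Ultrafilter ℕ)
    (hfree : (𝓤 : Filter ℕ) ≤ Filter.cofinite)
    (t u : Filter.Germ (𝓤 : Filter ℕ) ℝ) (hu : 0 < u) :
    Set.BijOn (fun s : Filter.Germ (𝓤 : Filter ℕ) ℝ => (s - t) / u)
        (WW 𝓤 t u) (WW 𝓤 0 1) ∧
    StrictMonoOn (fun s : Filter.Germ (𝓤 : Filter ℕ) ℝ => (s - t) / u)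
        (WW 𝓤 t u) := by
  have hmono : StrictMonoOn (fun s : Filter.Germ (𝓤 : Filter ℕ) ℝ => (s - t) / u)
      (WW 𝓤 t u) := by
    intro a _ b _ hab
    dsimp only
    exact div_lt_div_of_pos_right (by linarith) hu
  refine ⟨⟨?_, hmono.injOn, ?_⟩, hmono⟩
  · intro s hs
    rw [mem_WW_iff] at hs ⊢
    obtain ⟨n, h1, h2⟩ := hs
    refine ⟨n, ?_, ?_⟩
    · rw [lt_div_iff₀ hu]; nlinarith
    · rw [div_lt_iff₀ hu]; nlinarith
  · intro y hy
    rw [mem_WW_iff] at hy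
    obtain ⟨n, h1, h2⟩ := hy
    refine ⟨t + y * u, ?_, by field_simp; ring⟩
    rw [mem_WW_iff]
    refine ⟨n, ?_, ?_⟩
    · have : (-(n : Filter.Germ (𝓤 : Filter ℕ) ℝ)) * u < y * u :=
        mul_lt_mul_of_pos_right (by linarith) hu
      linarith
    · have : y * u < (n : Filter.Germ (𝓤 : Filter ℕ) ℝ) * u :=
        mul_lt_mul_of_pos_right (by linarith) hu
      linarith
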